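/- Fix an integer M ≥ 1, reals Ae > 0, 0 < z_th < Ae, r₀, r₁ ∈ (0,1) with r₀ + r₁ = 1, and μ > 0. For σ, σ₀ > 0 set x₁ = (z_th − Ae)/√(σ² + σ₀²/M) and x₂ = z_th/σ₀, and define q₀ = (1−Q(x₁))r₁/((1−Q(x₁))r₁ + (1−Q(x₂))r₀) and q₁ = Q(x₁)r₁/(Q(x₁)r₁ + Q(x₂)r₀). Then the M-interval conditional entropy M·[((1−Q(x₁))r₁ + (1−Q(x₂))r₀)·H₂(q₀) + (Q(x₁)r₁ + Q(x₂)r₀)·H₂(q₁)], divided by (σ² + σ₀²)^μ, tends to 0 as (σ, σ₀) → (0⁺, 0⁺) (Theorem 4: H(N|N̂)/(σ²+σ₀²)^μ → 0 for the M-interval photoelectron vector). -/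

import Mathlib

open MeasureTheory Filter Real

/-- The Gaussian tail function `Q(x) = ∫_x^∞ (1/√(2π)) e^{−u²/2} du`. -/
noncomputable def gaussQ (x : ℝ) : ℝ :=
  ∫ u in Set.Ioi x, (Real.sqrt (2 * Real.pi))⁻¹ * Real.exp (-u ^ 2 / 2)

/-- Binary entropy function. -/
noncomputable def H2 (x : ℝ) : ℝ := -x * Real.log x - (1 - x) * Real.log (1 - x)

lemma gauss_integrable : Integrable (fun u : ℝ => (Real.sqrt (2 * Real.pi))⁻¹ * Real.exp (-u ^ 2 / 2)) := by
  have h := (integrable_exp_neg_mul_sq (by norm_num : (0:ℝ) < 1/2)).const_mul (Real.sqrt (2 * Real.pi))⁻¹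
  convert h using 2 with u
  ring_nf

lemma gauss_total : ∫ u : ℝ, (Real.sqrt (2 * Real.pi))⁻¹ * Real.exp (-u ^ 2 / 2) = 1 := by
  rw [integral_const_mul]
  have : ∀ u : ℝ, Real.exp (-u ^ 2 / 2) = Real.exp (-(1/2) * u ^ 2) := fun u => by ring_nf
  simp_rw [this, integral_gaussian]
  rw [show (π / (1/2)) = 2 * π by ring]
  rw [inv_mul_cancel₀]
  positivity

lemma gaussQ_nonneg (x : ℝ) : 0 ≤ gaussQ x := by
  apply setIntegral_nonneg measurableSet_Ioi
  intro u _
  positivity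

lemma one_sub_gaussQ (x : ℝ) : 1 - gaussQ x = gaussQ (-x) := by
  have key : (∫ u in Set.Iic x, (Real.sqrt (2 * Real.pi))⁻¹ * Real.exp (-u ^ 2 / 2))
      + gaussQ x = 1 := by
    rw [gaussQ, intervalIntegral.integral_Iic_add_Ioi gauss_integrable.integrableOn gauss_integrable.integrableOn,
      gauss_total]
  have sym : gaussQ (-x) = ∫ u in Set.Iic x, (Real.sqrt (2 * Real.pi))⁻¹ * Real.exp (-u ^ 2 / 2) := by
    rw [gaussQ, ← neg_neg x, ← integral_comp_neg_Ioi]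
    norm_num
  linarith

lemma gaussQ_le_one (x : ℝ) : gaussQ x ≤ 1 := by
  have := gaussQ_nonneg (-x)
  have := one_sub_gaussQ x
  linarith

lemma sqrt_exp' (x : ℝ) : Real.sqrt (Real.exp x) = Real.exp (x / 2) := by
  rw [show Real.exp x = Real.exp (x/2) ^ 2 by rw [← Real.exp_nat_mul]; norm_num; ring_nf]
  exact Real.sqrt_sq (Real.exp_nonneg _)

lemma gaussQ_le (x : ℝ) (hx : 0 ≤ x) : gaussQ x ≤ 2 * Real.exp (-x ^ 2 / 4) := by
  have h1 : gaussQ x ≤ ∫ u in Set.Ioi x,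
      Real.exp (-x ^ 2 / 4) * ((Real.sqrt (2 * Real.pi))⁻¹ * Real.exp (-u ^ 2 / 4)) := by
    apply setIntegral_mono_on gauss_integrable.integrableOn _ measurableSet_Ioi
    · intro u hu
      have hu' : x ≤ u := le_of_lt hu
      have h2 : -u ^ 2 / 2 ≤ -x ^ 2 / 4 + -u ^ 2 / 4 := by nlinarith
      calc (Real.sqrt (2 * Real.pi))⁻¹ * Real.exp (-u ^ 2 / 2)
          ≤ (Real.sqrt (2 * Real.pi))⁻¹ * Real.exp (-x ^ 2 / 4 + -u ^ 2 / 4) := by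
            apply mul_le_mul_of_nonneg_left (Real.exp_le_exp.2 h2) (by positivity)
        _ = Real.exp (-x ^ 2 / 4) * ((Real.sqrt (2 * Real.pi))⁻¹ * Real.exp (-u ^ 2 / 4)) := by
            rw [Real.exp_add]; ring
    · have h := ((integrable_exp_neg_mul_sq (by norm_num : (0:ℝ) < 1/4)).const_mul
        ((Real.sqrt (2 * Real.pi))⁻¹)).const_mul (Real.exp (-x ^ 2 / 4))
      apply Integrable.integrableOn
      convert h using 2 with u
      ring_nf
  have h2 : (∫ u in Set.Ioi x,
      Real.exp (-x ^ 2 / 4) * ((Real.sqrt (2 * Real.pi))⁻¹ * Real.exp (-u ^ 2 / 4)))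
      ≤ Real.exp (-x ^ 2 / 4) * ((Real.sqrt (2 * Real.pi))⁻¹ * ∫ u : ℝ, Real.exp (-u ^ 2 / 4)) := by
    rw [integral_const_mul, integral_const_mul]
    apply mul_le_mul_of_nonneg_left _ (Real.exp_nonneg _)
    apply mul_le_mul_of_nonneg_left _ (by positivity)
    apply setIntegral_le_integral
    · have h := integrable_exp_neg_mul_sq (by norm_num : (0:ℝ) < 1/4)
      convert h using 2 with u; ring_nf
    · filter_upwards with u; positivity
  have h3 : (∫ u : ℝ, Real.exp (-u ^ 2 / 4)) = Real.sqrt (4 * Real.pi) := by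
    have : ∀ u : ℝ, Real.exp (-u ^ 2 / 4) = Real.exp (-(1/4) * u ^ 2) := fun u => by ring_nf
    simp_rw [this, integral_gaussian]
    rw [show (π / (1/4) : ℝ) = 4 * π by ring]
  have h4 : (Real.sqrt (2 * Real.pi))⁻¹ * Real.sqrt (4 * Real.pi) ≤ 2 := by
    rw [← Real.sqrt_inv, ← Real.sqrt_mul (by positivity)]
    have : (2 * π)⁻¹ * (4 * π) = 2 := by field_simp; ring
    rw [this]
    nlinarith [Real.sq_sqrt (by norm_num : (0:ℝ) ≤ 2), Real.sqrt_nonneg 2]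
  calc gaussQ x ≤ _ := h1
    _ ≤ _ := h2
    _ = Real.exp (-x ^ 2 / 4) * ((Real.sqrt (2 * Real.pi))⁻¹ * Real.sqrt (4 * Real.pi)) := by
        rw [h3]
    _ ≤ Real.exp (-x ^ 2 / 4) * 2 := mul_le_mul_of_nonneg_left h4 (Real.exp_nonneg _)
    _ = 2 * Real.exp (-x ^ 2 / 4) := by ring

lemma sqrt_gaussQ_le (x : ℝ) (hx : 0 ≤ x) : Real.sqrt (gaussQ x) ≤ 2 * Real.exp (-x ^ 2 / 8) := by
  calc Real.sqrt (gaussQ x) ≤ Real.sqrt (2 * Real.exp (-x ^ 2 / 4)) :=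
        Real.sqrt_le_sqrt (gaussQ_le x hx)
    _ = Real.sqrt 2 * Real.exp (-x ^ 2 / 8) := by
        rw [Real.sqrt_mul (by norm_num), sqrt_exp']
        ring_nf
    _ ≤ 2 * Real.exp (-x ^ 2 / 8) := by
        apply mul_le_mul_of_nonneg_right _ (Real.exp_nonneg _)
        nlinarith [Real.sq_sqrt (by norm_num : (0:ℝ) ≤ 2), Real.sqrt_nonneg 2]

lemma H2_symm (x : ℝ) : H2 x = H2 (1 - x) := by
  simp only [H2, sub_sub_cancel]; ring

lemma H2_nonneg {x : ℝ} (h0 : 0 ≤ x) (h1 : x ≤ 1) : 0 ≤ H2 x := by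
  have a : -x * Real.log x ≥ 0 := by
    rcases eq_or_lt_of_le h0 with h|h
    · simp [← h]
    · have := Real.log_nonpos (le_of_lt h) h1
      nlinarith
  have b : -(1 - x) * Real.log (1 - x) ≥ 0 := by
    rcases eq_or_lt_of_le h1 with h|h
    · simp [h]
    · have := Real.log_nonpos (x := 1 - x) (by linarith) (by linarith)
      nlinarith
  simp only [H2]; nlinarith

lemma H2_le {x : ℝ} (h0 : 0 ≤ x) (h1 : x ≤ 1) : H2 x ≤ 3 * Real.sqrt x := by
  have hs : Real.sqrt x * Real.sqrt x = x := Real.mul_self_sqrt h0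
  have hsnn : 0 ≤ Real.sqrt x := Real.sqrt_nonneg x
  have hA : -x * Real.log x ≤ 2 * Real.sqrt x := by
    rcases eq_or_lt_of_le h0 with h|h
    · simp [← h]
    · have hsp : 0 < Real.sqrt x := Real.sqrt_pos.2 h
      have hls : Real.log (Real.sqrt x) = Real.log x / 2 := Real.log_sqrt h0
      have := Real.log_le_sub_one_of_pos (inv_pos.2 hsp)
      rw [Real.log_inv] at this
      -- -log √x ≤ 1/√x - 1 ≤ 1/√x
      have h2 : -Real.log x ≤ 2 / Real.sqrt x := by
        have : -Real.log (Real.sqrt x) ≤ (Real.sqrt x)⁻¹ := by linarith [inv_pos.2 hsp]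
        rw [hls] at this
        rw [div_eq_mul_inv]
        linarith
      calc -x * Real.log x = x * (-Real.log x) := by ring
        _ ≤ x * (2 / Real.sqrt x) := by
            apply mul_le_mul_of_nonneg_left h2 h0
        _ = 2 * Real.sqrt x := by
            field_simp
            nlinarith
  have hB : -(1 - x) * Real.log (1 - x) ≤ Real.sqrt x := by
    rcases eq_or_lt_of_le h1 with h|h
    · simp [h]
    · have h1x : 0 < 1 - x := by linarith
      have := Real.log_le_sub_one_of_pos (inv_pos.2 h1x)
      rw [Real.log_inv] at this
      have h3 : -(1 - x) * Real.log (1 - x) ≤ x := by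
        have hinv : (1 - x)⁻¹ - 1 = x / (1 - x) := by field_simp; ring
        rw [hinv] at this
        calc -(1 - x) * Real.log (1 - x) = (1 - x) * (-Real.log (1 - x)) := by ring
          _ ≤ (1 - x) * (x / (1 - x)) := mul_le_mul_of_nonneg_left this (le_of_lt h1x)
          _ = x := by field_simp
      have h4 : x ≤ Real.sqrt x := by nlinarith
      linarith
  simp only [H2]
  linarith

lemma weighted_H2_le {a D : ℝ} (h0 : 0 ≤ a) (haD : a ≤ D) (hD1 : D ≤ 1) :
    D * H2 (a / D) ≤ 3 * Real.sqrt a := by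
  rcases eq_or_lt_of_le (le_trans h0 haD) with h|hDpos
  · simp [← h, H2]
  · have hq0 : 0 ≤ a / D := div_nonneg h0 (le_of_lt hDpos)
    have hq1 : a / D ≤ 1 := (div_le_one hDpos).2 haD
    calc D * H2 (a / D) ≤ D * (3 * Real.sqrt (a / D)) :=
          mul_le_mul_of_nonneg_left (H2_le hq0 hq1) (le_of_lt hDpos)
      _ = 3 * (Real.sqrt a * (Real.sqrt D⁻¹ * D)) := by
          rw [div_eq_mul_inv, Real.sqrt_mul h0]
          ring
      _ ≤ 3 * Real.sqrt a := by
          have : Real.sqrt D⁻¹ * D = Real.sqrt D := by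
            rw [Real.sqrt_inv]
            nth_rewrite 1 [show D = Real.sqrt D * Real.sqrt D from (Real.mul_self_sqrt (le_of_lt hDpos)).symm]
            field_simp
            rw [Real.sqrt_sq (Real.sqrt_nonneg D), Real.mul_self_sqrt hDpos.le]
          rw [this]
          have hsD : Real.sqrt D ≤ 1 := by
            rw [show (1:ℝ) = Real.sqrt 1 by simp]
            exact Real.sqrt_le_sqrt hD1
          nlinarith [Real.sqrt_nonneg a]

lemma weighted_H2_le' {a D : ℝ} (h0 : 0 ≤ a) (haD : a ≤ D) (hD1 : D ≤ 1) :
    D * H2 (a / D) ≤ 3 * Real.sqrt (D - a) := by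
  rcases eq_or_lt_of_le (le_trans h0 haD) with h|hDpos
  · simp [← h, H2]
  · have : H2 (a / D) = H2 ((D - a) / D) := by
      rw [H2_symm]
      congr 1
      field_simp
    rw [this]
    exact weighted_H2_le (by linarith) (by linarith) hD1

lemma weighted_H2_nonneg {a D : ℝ} (h0 : 0 ≤ a) (haD : a ≤ D) :
    0 ≤ D * H2 (a / D) := by
  rcases eq_or_lt_of_le (le_trans h0 haD) with h|hDpos
  · simp [← h, H2]
  · exact mul_nonneg (le_of_lt hDpos)
      (H2_nonneg (div_nonneg h0 (le_of_lt hDpos)) ((div_le_one hDpos).2 haD))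

lemma bound_tendsto {c K μ : ℝ} (hc : 0 < c) (hμ : 0 < μ) :
    Tendsto (fun s : ℝ => K * Real.exp (-c / s) / s ^ μ) (nhdsWithin 0 (Set.Ioi 0)) (nhds 0) := by
  have h1 : Tendsto (fun y : ℝ => K * (y ^ μ * Real.exp (-c * y))) atTop (nhds 0) := by
    have := (tendsto_rpow_mul_exp_neg_mul_atTop_nhds_zero μ c hc).const_mul K
    simpa using this
  have h2 := h1.comp tendsto_inv_nhdsGT_zero
  apply h2.congr'
  filter_upwards [self_mem_nhdsWithin] with s hs
  have hs' : (0:ℝ) < s := hs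
  simp only [Function.comp]
  rw [Real.inv_rpow (le_of_lt hs')]
  rw [show -c * s⁻¹ = -c / s by rw [div_eq_mul_inv]]
  rw [div_eq_mul_inv]
  ring

set_option maxHeartbeats 1000000 in
lemma key_bound (M : ℕ) (hM : 1 ≤ M) (Ae zth r0 r1 : ℝ)
    (hz2 : zth < Ae) (hz1 : 0 < zth)
    (hr0 : r0 ∈ Set.Ioo (0 : ℝ) 1) (hr1 : r1 ∈ Set.Ioo (0 : ℝ) 1)
    (hsum : r0 + r1 = 1) (σ σ₀ : ℝ) (hσ : 0 < σ) (hσ₀ : 0 < σ₀) :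
    0 ≤ (M * (((1 - gaussQ ((zth - Ae) / Real.sqrt (σ ^ 2 + σ₀ ^ 2 / M))) * r1 +
                (1 - gaussQ (zth / σ₀)) * r0) *
              H2 ((1 - gaussQ ((zth - Ae) / Real.sqrt (σ ^ 2 + σ₀ ^ 2 / M))) * r1 /
                ((1 - gaussQ ((zth - Ae) / Real.sqrt (σ ^ 2 + σ₀ ^ 2 / M))) * r1 +
                  (1 - gaussQ (zth / σ₀)) * r0)) +
            (gaussQ ((zth - Ae) / Real.sqrt (σ ^ 2 + σ₀ ^ 2 / M)) * r1 +
                gaussQ (zth / σ₀) * r0) *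
              H2 (gaussQ ((zth - Ae) / Real.sqrt (σ ^ 2 + σ₀ ^ 2 / M)) * r1 /
                (gaussQ ((zth - Ae) / Real.sqrt (σ ^ 2 + σ₀ ^ 2 / M)) * r1 +
                  gaussQ (zth / σ₀) * r0)))) ∧
      (M * (((1 - gaussQ ((zth - Ae) / Real.sqrt (σ ^ 2 + σ₀ ^ 2 / M))) * r1 +
                (1 - gaussQ (zth / σ₀)) * r0) *
              H2 ((1 - gaussQ ((zth - Ae) / Real.sqrt (σ ^ 2 + σ₀ ^ 2 / M))) * r1 /
                ((1 - gaussQ ((zth - Ae) / Real.sqrt (σ ^ 2 + σ₀ ^ 2 / M))) * r1 +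
                  (1 - gaussQ (zth / σ₀)) * r0)) +
            (gaussQ ((zth - Ae) / Real.sqrt (σ ^ 2 + σ₀ ^ 2 / M)) * r1 +
                gaussQ (zth / σ₀) * r0) *
              H2 (gaussQ ((zth - Ae) / Real.sqrt (σ ^ 2 + σ₀ ^ 2 / M)) * r1 /
                (gaussQ ((zth - Ae) / Real.sqrt (σ ^ 2 + σ₀ ^ 2 / M)) * r1 +
                  gaussQ (zth / σ₀) * r0)))) ≤
        12 * M * Real.exp (-(min ((Ae - zth) ^ 2) (zth ^ 2) / 8) / (σ ^ 2 + σ₀ ^ 2)) := by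
  have hMpos : (0:ℝ) < M := by exact_mod_cast Nat.lt_of_lt_of_le Nat.zero_lt_one hM
  have hM1 : (1:ℝ) ≤ M := by exact_mod_cast hM
  set v : ℝ := σ ^ 2 + σ₀ ^ 2 / M with hv_def
  set s : ℝ := σ ^ 2 + σ₀ ^ 2 with hs_def
  have hv : 0 < v := by positivity
  have hs : 0 < s := by positivity
  have hvs : v ≤ s := by
    have : σ₀ ^ 2 / M ≤ σ₀ ^ 2 := div_le_self (by positivity) hM1
    simp only [hv_def, hs_def]; linarith
  set x1 : ℝ := (zth - Ae) / Real.sqrt v with hx1_def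
  set x2 : ℝ := zth / σ₀ with hx2_def
  have hsqv : 0 < Real.sqrt v := Real.sqrt_pos.2 hv
  have hx1neg : 0 ≤ -x1 := by
    rw [hx1_def, ← neg_div, neg_sub]
    exact div_nonneg (by linarith) (le_of_lt hsqv)
  have hx2pos : 0 ≤ x2 := by positivity
  set Q1 : ℝ := gaussQ x1 with hQ1
  set Q2 : ℝ := gaussQ x2 with hQ2
  have h1Q1 : 1 - Q1 = gaussQ (-x1) := one_sub_gaussQ x1
  have h1Q2 : 1 - Q2 = gaussQ (-x2) := one_sub_gaussQ x2
  have hQ1n : (0:ℝ) ≤ Q1 := gaussQ_nonneg x1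
  have hQ2n : (0:ℝ) ≤ Q2 := gaussQ_nonneg x2
  have hQ1le : Q1 ≤ 1 := gaussQ_le_one x1
  have hQ2le : Q2 ≤ 1 := gaussQ_le_one x2
  have hr0a := hr0.1; have hr0b := hr0.2
  have hr1a := hr1.1; have hr1b := hr1.2
  have ha0 : 0 ≤ (1 - Q1) * r1 := mul_nonneg (by linarith) (le_of_lt hr1a)
  have hb0 : 0 ≤ (1 - Q2) * r0 := mul_nonneg (by linarith) (le_of_lt hr0a)
  have haD0 : (1 - Q1) * r1 ≤ (1 - Q1) * r1 + (1 - Q2) * r0 := le_add_of_nonneg_right hb0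
  have hD0le : (1 - Q1) * r1 + (1 - Q2) * r0 ≤ 1 := by
    have u1 : (1 - Q1) * r1 ≤ 1 * r1 :=
      mul_le_mul_of_nonneg_right (by linarith) (le_of_lt hr1a)
    have u2 : (1 - Q2) * r0 ≤ 1 * r0 :=
      mul_le_mul_of_nonneg_right (by linarith) (le_of_lt hr0a)
    linarith
  have hA0 : 0 ≤ Q1 * r1 := mul_nonneg hQ1n (le_of_lt hr1a)
  have hB0 : 0 ≤ Q2 * r0 := mul_nonneg hQ2n (le_of_lt hr0a)
  have hAD1 : Q1 * r1 ≤ Q1 * r1 + Q2 * r0 := le_add_of_nonneg_right hB0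
  have hD1le : Q1 * r1 + Q2 * r0 ≤ 1 := by
    have u1 : Q1 * r1 ≤ 1 * r1 := mul_le_mul_of_nonneg_right hQ1le (le_of_lt hr1a)
    have u2 : Q2 * r0 ≤ 1 * r0 := mul_le_mul_of_nonneg_right hQ2le (le_of_lt hr0a)
    linarith
  set T0 : ℝ := ((1 - Q1) * r1 + (1 - Q2) * r0) *
      H2 ((1 - Q1) * r1 / ((1 - Q1) * r1 + (1 - Q2) * r0)) with hT0
  set T1 : ℝ := (Q1 * r1 + Q2 * r0) * H2 (Q1 * r1 / (Q1 * r1 + Q2 * r0)) with hT1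
  have ht0n : 0 ≤ T0 := weighted_H2_nonneg ha0 haD0
  have ht1n : 0 ≤ T1 := weighted_H2_nonneg hA0 hAD1
  constructor
  · exact mul_nonneg (le_of_lt hMpos) (by linarith)
  · set E : ℝ := Real.exp (-(min ((Ae - zth) ^ 2) (zth ^ 2) / 8) / s) with hE_def
    have hterm0 : T0 ≤ 6 * Real.exp (-(-x1) ^ 2 / 8) := by
      refine le_trans (weighted_H2_le ha0 haD0 hD0le) ?_
      have h1 : Real.sqrt ((1 - Q1) * r1) ≤ Real.sqrt (gaussQ (-x1)) := by
        apply Real.sqrt_le_sqrt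
        rw [← h1Q1]
        exact mul_le_of_le_one_right (by linarith) (le_of_lt hr1b)
      have h2 := sqrt_gaussQ_le (-x1) hx1neg
      linarith
    have hterm1 : T1 ≤ 6 * Real.exp (-x2 ^ 2 / 8) := by
      have h0 := weighted_H2_le' hA0 hAD1 hD1le
      have heq : Q1 * r1 + Q2 * r0 - Q1 * r1 = Q2 * r0 := by ring
      rw [heq] at h0
      refine le_trans h0 ?_
      have h1 : Real.sqrt (Q2 * r0) ≤ Real.sqrt Q2 := by
        apply Real.sqrt_le_sqrt
        exact mul_le_of_le_one_right hQ2n (le_of_lt hr0b)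
      have h2 := sqrt_gaussQ_le x2 hx2pos
      linarith
    have hc1 : -(-x1) ^ 2 / 8 ≤ -(min ((Ae - zth) ^ 2) (zth ^ 2) / 8) / s := by
      have hx1sq : (-x1) ^ 2 = (Ae - zth) ^ 2 / v := by
        rw [hx1_def, ← neg_div, neg_sub, div_pow, Real.sq_sqrt (le_of_lt hv)]
      have hYX : ((Ae - zth) ^ 2 ⊓ zth ^ 2) / s ≤ (Ae - zth) ^ 2 / v :=
        div_le_div₀ (by positivity) (min_le_left _ _) hv hvs
      rw [hx1sq]
      calc -((Ae - zth) ^ 2 / v) / 8 ≤ -(((Ae - zth) ^ 2 ⊓ zth ^ 2) / s) / 8 := by linarith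
        _ = -(((Ae - zth) ^ 2 ⊓ zth ^ 2) / 8) / s := by
            rw [neg_div, neg_div, div_right_comm]
    have hc2 : -x2 ^ 2 / 8 ≤ -(min ((Ae - zth) ^ 2) (zth ^ 2) / 8) / s := by
      have hx2sq : x2 ^ 2 = zth ^ 2 / σ₀ ^ 2 := by rw [hx2_def, div_pow]
      have hσ₀s : σ₀ ^ 2 ≤ s := by
        simp only [hs_def]; linarith [sq_nonneg σ]
      have hYX : ((Ae - zth) ^ 2 ⊓ zth ^ 2) / s ≤ zth ^ 2 / σ₀ ^ 2 :=
        div_le_div₀ (by positivity) (min_le_right _ _) (by positivity) hσ₀s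
      rw [hx2sq]
      calc -(zth ^ 2 / σ₀ ^ 2) / 8 ≤ -(((Ae - zth) ^ 2 ⊓ zth ^ 2) / s) / 8 := by linarith
        _ = -(((Ae - zth) ^ 2 ⊓ zth ^ 2) / 8) / s := by
            rw [neg_div, neg_div, div_right_comm]
    have he1 := Real.exp_le_exp.2 hc1
    have he2 := Real.exp_le_exp.2 hc2
    have hsumT : T0 + T1 ≤ 12 * E := by
      rw [hE_def]; linarith
    calc (M:ℝ) * (T0 + T1) ≤ (M:ℝ) * (12 * E) :=
          mul_le_mul_of_nonneg_left hsumT (le_of_lt hMpos)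
      _ = 12 * M * E := by ring

theorem stmt_6 (M : ℕ) (hM : 1 ≤ M) (Ae zth r0 r1 μ : ℝ)
    (hAe : 0 < Ae) (hz1 : 0 < zth) (hz2 : zth < Ae)
    (hr0 : r0 ∈ Set.Ioo (0 : ℝ) 1) (hr1 : r1 ∈ Set.Ioo (0 : ℝ) 1)
    (hsum : r0 + r1 = 1) (hμ : 0 < μ) :
    Tendsto (fun p : ℝ × ℝ =>
        (M * (((1 - gaussQ ((zth - Ae) / Real.sqrt (p.1 ^ 2 + p.2 ^ 2 / M))) * r1 +
                (1 - gaussQ (zth / p.2)) * r0) *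
              H2 ((1 - gaussQ ((zth - Ae) / Real.sqrt (p.1 ^ 2 + p.2 ^ 2 / M))) * r1 /
                ((1 - gaussQ ((zth - Ae) / Real.sqrt (p.1 ^ 2 + p.2 ^ 2 / M))) * r1 +
                  (1 - gaussQ (zth / p.2)) * r0)) +
            (gaussQ ((zth - Ae) / Real.sqrt (p.1 ^ 2 + p.2 ^ 2 / M)) * r1 +
                gaussQ (zth / p.2) * r0) *
              H2 (gaussQ ((zth - Ae) / Real.sqrt (p.1 ^ 2 + p.2 ^ 2 / M)) * r1 /
                (gaussQ ((zth - Ae) / Real.sqrt (p.1 ^ 2 + p.2 ^ 2 / M)) * r1 +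
                  gaussQ (zth / p.2) * r0)))) /
          (p.1 ^ 2 + p.2 ^ 2) ^ μ)
      ((nhdsWithin 0 (Set.Ioi 0)) ×ˢ (nhdsWithin 0 (Set.Ioi 0))) (nhds 0) := by
  have hminpos : 0 < min ((Ae - zth) ^ 2) (zth ^ 2) / 8 := by
    have h1 : 0 < (Ae - zth) ^ 2 := pow_pos (by linarith) 2
    have h2 : 0 < zth ^ 2 := pow_pos hz1 2
    have h3 := lt_min h1 h2
    linarith
  have hbt := bound_tendsto (K := 12 * M) hminpos hμ
  have hmem : (Set.Ioi (0:ℝ)) ×ˢ (Set.Ioi (0:ℝ)) ∈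
      (nhdsWithin (0:ℝ) (Set.Ioi 0)) ×ˢ (nhdsWithin (0:ℝ) (Set.Ioi 0)) :=
    Filter.prod_mem_prod self_mem_nhdsWithin self_mem_nhdsWithin
  have hsmap : Tendsto (fun p : ℝ × ℝ => p.1 ^ 2 + p.2 ^ 2)
      ((nhdsWithin 0 (Set.Ioi 0)) ×ˢ (nhdsWithin 0 (Set.Ioi 0)))
      (nhdsWithin 0 (Set.Ioi 0)) := by
    rw [tendsto_nhdsWithin_iff]
    constructor
    · have hle : (nhdsWithin (0:ℝ) (Set.Ioi 0)) ×ˢ (nhdsWithin (0:ℝ) (Set.Ioi 0)) ≤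
          nhds ((0:ℝ), (0:ℝ)) := by
        rw [nhds_prod_eq]
        exact Filter.prod_mono nhdsWithin_le_nhds nhdsWithin_le_nhds
      have hcont : Tendsto (fun p : ℝ × ℝ => p.1 ^ 2 + p.2 ^ 2)
          (nhds ((0:ℝ), (0:ℝ))) (nhds 0) := by
        have h := ((continuous_fst.pow 2).add (continuous_snd.pow 2)).tendsto ((0:ℝ), (0:ℝ))
        norm_num at h
        exact h
      exact hcont.mono_left hle
    · filter_upwards [hmem] with p hp
      have h1 : (0:ℝ) < p.1 := hp.1
      have h2 : (0:ℝ) < p.2 := hp.2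
      exact Set.mem_Ioi.2 (by positivity)
  have hbound := hbt.comp hsmap
  apply squeeze_zero' ?_ ?_ hbound
  · filter_upwards [hmem] with p hp
    have hk := key_bound M hM Ae zth r0 r1 hz2 hz1 hr0 hr1 hsum p.1 p.2 hp.1 hp.2
    exact div_nonneg hk.1 (Real.rpow_nonneg (by positivity) μ)
  · filter_upwards [hmem] with p hp
    have hk := key_bound M hM Ae zth r0 r1 hz2 hz1 hr0 hr1 hsum p.1 p.2 hp.1 hp.2
    have h1 : (0:ℝ) < p.1 := hp.1
    have h2 : (0:ℝ) < p.2 := hp.2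
    have hspos : (0:ℝ) < (p.1 ^ 2 + p.2 ^ 2) ^ μ :=
      Real.rpow_pos_of_pos (by positivity) μ
    simp only [Function.comp_apply]
    exact div_le_div_of_nonneg_right hk.2 hspos.le
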